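/- arXiv:2110.07226 — 3 statements merged into one kernel-verified Lean document; each statement's English description precedes it below -/
import Mathlib

section
/- With μ_A(η, w_A, w_B) = [w_A − (1−η)(w_A + w_B − 2 w_A w_B)] / [η w_A + (1−η) w_B] · θ* and θ* > 0, η ∈ (0,1), w_A, w_B ∈ (0,1), the partial derivative of μ_A with respect to η equals 2(1−w_A) w_A w_B θ* / (η w_A + (1−η) w_B)², and in particular is strictly positive. -/
/-- The long-run opinion of group A is increasing in its population share:
`∂μ_A/∂η = 2(1-wA) wA wB θ* / (η wA + (1-η) wB)² > 0`. -/
theorem dmuA_deta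
    (η wA wB θ : ℝ) (hθ : 0 < θ) (hη : η ∈ Set.Ioo (0 : ℝ) 1)
    (hwA : wA ∈ Set.Ioo (0 : ℝ) 1) (hwB : wB ∈ Set.Ioo (0 : ℝ) 1) :
    HasDerivAt (fun x : ℝ =>
        (wA - (1 - x) * (wA + wB - 2 * wA * wB)) / (x * wA + (1 - x) * wB) * θ)
      (2 * (1 - wA) * wA * wB * θ / (η * wA + (1 - η) * wB) ^ 2) η ∧
    0 < 2 * (1 - wA) * wA * wB * θ / (η * wA + (1 - η) * wB) ^ 2 := by
  obtain ⟨hη0, hη1⟩ := hη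
  obtain ⟨hwA0, hwA1⟩ := hwA
  obtain ⟨hwB0, hwB1⟩ := hwB
  have hD : 0 < η * wA + (1 - η) * wB := by nlinarith
  have hnum : HasDerivAt (fun x : ℝ => wA - (1 - x) * (wA + wB - 2 * wA * wB))
      (wA + wB - 2 * wA * wB) η := by
    have := (((hasDerivAt_const η (1:ℝ)).sub (hasDerivAt_id η)).mul_const
        (wA + wB - 2 * wA * wB)).const_sub wA
    simpa using this
  have hden : HasDerivAt (fun x : ℝ => x * wA + (1 - x) * wB) (wA - wB) η := by
    have : HasDerivAt (fun x : ℝ => x * wA + (1 - x) * wB)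
        (1 * wA + (0 - 1) * wB) η :=
      ((hasDerivAt_id η).mul_const wA).add
        (((hasDerivAt_const η (1:ℝ)).sub (hasDerivAt_id η)).mul_const wB)
    simpa [sub_eq_add_neg] using this
  have h := ((hnum.div hden hD.ne').mul_const θ)
  constructor
  · refine h.congr_deriv ?_
    rw [div_mul_eq_mul_div]
    congr 1
    ring
  · have h1 : 0 < 1 - wA := by linarith
    exact div_pos (by positivity) (by positivity)
end

section
/- With μ_A(η, w_A, w_B) = [w_A − (1−η)(w_A + w_B − 2 w_A w_B)] / [η w_A + (1−η) w_B] · θ*, θ* > 0, η ∈ (0,1), w_A, w_B ∈ (0,1), we have ∂μ_A/∂w_A = 2 w_B (w_B(1−η) + η)(1−η) θ* / (η w_A + (1−η) w_B)² > 0. -/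
/-- The long-run opinion of group A is increasing in the weight it gives to the signal:
`∂μ_A/∂w_A = 2 w_B (w_B(1-η) + η)(1-η) θ* / (η w_A + (1-η) w_B)² > 0`. -/
theorem dmuA_dwA
    (η wA wB θ : ℝ) (hθ : 0 < θ) (hη : η ∈ Set.Ioo (0 : ℝ) 1)
    (hwA : wA ∈ Set.Ioo (0 : ℝ) 1) (hwB : wB ∈ Set.Ioo (0 : ℝ) 1) :
    HasDerivAt (fun x : ℝ =>
        (x - (1 - η) * (x + wB - 2 * x * wB)) / (η * x + (1 - η) * wB) * θ)
      (2 * wB * (wB * (1 - η) + η) * (1 - η) * θ / (η * wA + (1 - η) * wB) ^ 2) wA ∧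
    0 < 2 * wB * (wB * (1 - η) + η) * (1 - η) * θ / (η * wA + (1 - η) * wB) ^ 2 := by
  obtain ⟨hη0, hη1⟩ := hη
  obtain ⟨hA0, hA1⟩ := hwA
  obtain ⟨hB0, hB1⟩ := hwB
  have h1η : 0 < 1 - η := by linarith
  have hD : 0 < η * wA + (1 - η) * wB := by positivity
  have hN : HasDerivAt (fun x : ℝ => x - (1 - η) * (x + wB - 2 * x * wB))
      (1 - (1 - η) * (1 - 2 * wB)) wA := by
    have h1 : HasDerivAt (fun x : ℝ => x + wB - 2 * x * wB) (1 - 2 * wB) wA := by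
      simpa using (((hasDerivAt_id wA).add_const wB).fun_sub
        (((hasDerivAt_id wA).const_mul 2).mul_const wB))
    simpa using (hasDerivAt_id' wA).fun_sub (h1.const_mul (1 - η))
  have hDen : HasDerivAt (fun x : ℝ => η * x + (1 - η) * wB) η wA := by
    simpa using ((hasDerivAt_id wA).const_mul η).add_const ((1 - η) * wB)
  have h := (hN.fun_div hDen hD.ne').mul_const θ
  constructor
  · refine h.congr_deriv ?_
    rw [div_mul_eq_mul_div]
    congr 1
    ring
  · have h1 : 0 < 2 * wB * (wB * (1 - η) + η) * (1 - η) * θ := by positivity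
    exact div_pos h1 (by positivity)
end

section
/- With μ_A(η, w_A, w_B) = [w_A − (1−η)(w_A + w_B − 2 w_A w_B)] / [η w_A + (1−η) w_B] · θ*, θ* > 0, η ∈ (0,1), w_A, w_B ∈ (0,1), we have ∂μ_A/∂w_B = −2(1−w_A) w_A (1−η) η θ* / (η w_A + (1−η) w_B)² < 0. -/
/-- The long-run opinion of group A is decreasing in the weight the other group gives to
the signal: `∂μ_A/∂w_B = −2(1-w_A) w_A (1-η) η θ* / (η w_A + (1-η) w_B)² < 0`. -/
theorem dmuA_dwB
    (η wA wB θ : ℝ) (hθ : 0 < θ) (hη : η ∈ Set.Ioo (0 : ℝ) 1)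
    (hwA : wA ∈ Set.Ioo (0 : ℝ) 1) (hwB : wB ∈ Set.Ioo (0 : ℝ) 1) :
    HasDerivAt (fun x : ℝ =>
        (wA - (1 - η) * (wA + x - 2 * wA * x)) / (η * wA + (1 - η) * x) * θ)
      (-(2 * (1 - wA) * wA * (1 - η) * η * θ / (η * wA + (1 - η) * wB) ^ 2)) wB ∧
    -(2 * (1 - wA) * wA * (1 - η) * η * θ / (η * wA + (1 - η) * wB) ^ 2) < 0 := by
  obtain ⟨hη0, hη1⟩ := hη
  obtain ⟨hA0, hA1⟩ := hwA
  obtain ⟨hB0, hB1⟩ := hwB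
  have hden : 0 < η * wA + (1 - η) * wB := by nlinarith
  have hnum : HasDerivAt (fun x : ℝ => wA - (1 - η) * (wA + x - 2 * wA * x))
      (-((1 - η) * (1 - 2 * wA))) wB := by
    have : HasDerivAt (fun x : ℝ => wA + x - 2 * wA * x) (1 - 2 * wA) wB := by
      simpa [Pi.sub_def] using (((hasDerivAt_id wB).const_add wA).sub ((hasDerivAt_id wB).const_mul (2 * wA)))
    simpa using (this.const_mul (1 - η)).const_sub wA
  have hd : HasDerivAt (fun x : ℝ => η * wA + (1 - η) * x) (1 - η) wB := by
    simpa using ((hasDerivAt_id wB).const_mul (1 - η)).const_add (η * wA)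
  have h : HasDerivAt (fun x : ℝ => (wA - (1 - η) * (wA + x - 2 * wA * x)) / (η * wA + (1 - η) * x) * θ) ((-((1 - η) * (1 - 2 * wA)) * (η * wA + (1 - η) * wB) - (wA - (1 - η) * (wA + wB - 2 * wA * wB)) * (1 - η)) / (η * wA + (1 - η) * wB) ^ 2 * θ) wB := ((hnum.div hd hden.ne').mul_const θ)
  constructor
  · convert h using 1
    field_simp
    ring
  · have h1 : 0 < 2 * (1 - wA) * wA * (1 - η) * η * θ / (η * wA + (1 - η) * wB) ^ 2 := by
      have hs : 0 < (η * wA + (1 - η) * wB) ^ 2 := by positivity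
      apply div_pos _ hs
      have h1 : 0 < (1 - wA) * wA := by nlinarith
      have h2 : 0 < (1 - η) * η := by nlinarith
      calc (0:ℝ) < ((1 - wA) * wA) * ((1 - η) * η) * (2 * θ) := by positivity
        _ = 2 * (1 - wA) * wA * (1 - η) * η * θ := by ring
    linarith
end
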